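/- Let (ξ, η, φ) be an almost contact metric structure on the finite-dimensional real inner product space (V, ⟨·,·⟩), and on W = ℝ × V define J(t, X) = (−η(X), t·ξ + φ(X)) and e⁰(t,X) = t. Let β be an alternating 2-form on V with ι_ξβ = 0 and β(φX, φY) = β(X,Y) for all X, Y, and let γ be an alternating 3-form on V with ι_ξγ = 0; regard β, γ, η as forms on W via the projection W → V. Then the 3-form Γ := −e⁰∧β + γ on W satisfies Γ(Jw₁, Jw₂, Jw₃) = (η∧β + γ(φ·, φ·, φ·))(w₁, w₂, w₃) for all w₁, w₂, w₃ ∈ W. (Taking β = dη and γ = dF, this computes the torsion 3-form of the KT cylinder over a Sasaki-with-torsion manifold: dω_K(J·,J·,J·) = η∧dη + d^φF.) -/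

import Mathlib

open RealInnerProductSpace

section Aux
variable {V : Type*} [NormedAddCommGroup V] [InnerProductSpace ℝ V]

lemma upd2_0 (a x y : V) : Function.update ![a, y] 0 x = ![x, y] := by
  ext i; fin_cases i <;> simp
lemma upd2_1 (x a y : V) : Function.update ![x, a] 1 y = ![x, y] := by
  ext i; fin_cases i <;> simp
lemma upd3_0 (a x y z : V) : Function.update ![a, y, z] 0 x = ![x, y, z] := by
  ext i; fin_cases i <;> simp
lemma upd3_1 (a x y z : V) : Function.update ![x, a, z] 1 y = ![x, y, z] := by
  ext i; fin_cases i <;> simp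
lemma upd3_2 (a x y z : V) : Function.update ![x, y, a] 2 z = ![x, y, z] := by
  ext i; fin_cases i <;> simp

lemma b2_add0 (β : V [⋀^Fin 2]→ₗ[ℝ] ℝ) (a b y : V) :
    β ![a + b, y] = β ![a, y] + β ![b, y] := by
  have := β.map_update_add ![a, y] 0 a b
  simpa [upd2_0] using this
lemma b2_add1 (β : V [⋀^Fin 2]→ₗ[ℝ] ℝ) (x a b : V) :
    β ![x, a + b] = β ![x, a] + β ![x, b] := by
  have := β.map_update_add ![x, a] 1 a b
  simpa [upd2_1] using this
lemma b2_smul0 (β : V [⋀^Fin 2]→ₗ[ℝ] ℝ) (c : ℝ) (x y : V) :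
    β ![c • x, y] = c * β ![x, y] := by
  have := β.map_update_smul ![x, y] 0 c x
  simpa [upd2_0] using this
lemma b2_smul1 (β : V [⋀^Fin 2]→ₗ[ℝ] ℝ) (c : ℝ) (x y : V) :
    β ![x, c • y] = c * β ![x, y] := by
  have := β.map_update_smul ![x, y] 1 c y
  simpa [upd2_1] using this

lemma b3_add0 (γ : V [⋀^Fin 3]→ₗ[ℝ] ℝ) (a b y z : V) :
    γ ![a + b, y, z] = γ ![a, y, z] + γ ![b, y, z] := by
  have := γ.map_update_add ![a, y, z] 0 a b
  simpa [upd3_0] using this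
lemma b3_add1 (γ : V [⋀^Fin 3]→ₗ[ℝ] ℝ) (x a b z : V) :
    γ ![x, a + b, z] = γ ![x, a, z] + γ ![x, b, z] := by
  have := γ.map_update_add ![x, a, z] 1 a b
  simpa [upd3_1] using this
lemma b3_add2 (γ : V [⋀^Fin 3]→ₗ[ℝ] ℝ) (x y a b : V) :
    γ ![x, y, a + b] = γ ![x, y, a] + γ ![x, y, b] := by
  have := γ.map_update_add ![x, y, a] 2 a b
  simpa [upd3_2] using this
lemma b3_smul0 (γ : V [⋀^Fin 3]→ₗ[ℝ] ℝ) (c : ℝ) (x y z : V) :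
    γ ![c • x, y, z] = c * γ ![x, y, z] := by
  have := γ.map_update_smul ![x, y, z] 0 c x
  simpa [upd3_0] using this
lemma b3_smul1 (γ : V [⋀^Fin 3]→ₗ[ℝ] ℝ) (c : ℝ) (x y z : V) :
    γ ![x, c • y, z] = c * γ ![x, y, z] := by
  have := γ.map_update_smul ![x, y, z] 1 c y
  simpa [upd3_1] using this
lemma b3_smul2 (γ : V [⋀^Fin 3]→ₗ[ℝ] ℝ) (c : ℝ) (x y z : V) :
    γ ![x, y, c • z] = c * γ ![x, y, z] := by
  have := γ.map_update_smul ![x, y, z] 2 c z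
  simpa [upd3_2] using this

end Aux

/-- The almost complex structure `J(t,X) = (−η(X), t·ξ + φ(X))` of the cylinder
`ℝ × V` over an almost contact metric structure `(ξ, η, φ)` on `V`. -/
noncomputable def Jcyl {V : Type*} [NormedAddCommGroup V] [InnerProductSpace ℝ V]
    (ξ : V) (φ : V →ₗ[ℝ] V) : ℝ × V → ℝ × V :=
  fun p => (-⟪ξ, p.2⟫, p.1 • ξ + φ p.2)

/-- Torsion of the KT cylinder: for `Γ = −e⁰∧β + γ` on `W = ℝ × V` (with `β`
a horizontal `(1,1)`-form and `γ` a horizontal 3-form on `V`, pulled back to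
`W`), one has `Γ(J·, J·, J·) = η∧β + γ(φ·, φ·, φ·)`. -/
theorem stmt_14 {V : Type*} [NormedAddCommGroup V] [InnerProductSpace ℝ V]
    [FiniteDimensional ℝ V]
    (ξ : V) (φ : V →ₗ[ℝ] V)
    (hξ : ⟪ξ, ξ⟫ = 1) (hφξ : φ ξ = 0)
    (hφ2 : ∀ X : V, φ (φ X) = -X + ⟪ξ, X⟫ • ξ)
    (hφg : ∀ X Y : V, ⟪φ X, φ Y⟫ = ⟪X, Y⟫ - ⟪ξ, X⟫ * ⟪ξ, Y⟫)
    (β : V [⋀^Fin 2]→ₗ[ℝ] ℝ) (γ : V [⋀^Fin 3]→ₗ[ℝ] ℝ)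
    (hβξ : ∀ Y : V, β ![ξ, Y] = 0)
    (hβ11 : ∀ X Y : V, β ![φ X, φ Y] = β ![X, Y])
    (hγξ : ∀ Y Z : V, γ ![ξ, Y, Z] = 0) :
    ∀ w₁ w₂ w₃ : ℝ × V,
      -((Jcyl ξ φ w₁).1 * β ![(Jcyl ξ φ w₂).2, (Jcyl ξ φ w₃).2]
          - (Jcyl ξ φ w₂).1 * β ![(Jcyl ξ φ w₁).2, (Jcyl ξ φ w₃).2]
          + (Jcyl ξ φ w₃).1 * β ![(Jcyl ξ φ w₁).2, (Jcyl ξ φ w₂).2])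
        + γ ![(Jcyl ξ φ w₁).2, (Jcyl ξ φ w₂).2, (Jcyl ξ φ w₃).2]
      = ⟪ξ, w₁.2⟫ * β ![w₂.2, w₃.2] - ⟪ξ, w₂.2⟫ * β ![w₁.2, w₃.2]
          + ⟪ξ, w₃.2⟫ * β ![w₁.2, w₂.2]
        + γ ![φ w₁.2, φ w₂.2, φ w₃.2] := by
  -- ξ in the second slot of β vanishes
  have hβξ' : ∀ Y : V, β ![Y, ξ] = 0 := by
    intro Y
    have h0 : β ![ξ + Y, ξ + Y] = 0 :=
      β.map_eq_zero_of_eq ![ξ + Y, ξ + Y] (by simp) (i := 0) (j := 1) (by decide)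
    have hd : β ![ξ + Y, ξ + Y]
        = β ![ξ, ξ] + β ![ξ, Y] + (β ![Y, ξ] + β ![Y, Y]) := by
      rw [b2_add0, b2_add1, b2_add1]
    have hξξ : β ![ξ, ξ] = 0 :=
      β.map_eq_zero_of_eq ![ξ, ξ] (by simp) (i := 0) (j := 1) (by decide)
    have hYY : β ![Y, Y] = 0 :=
      β.map_eq_zero_of_eq ![Y, Y] (by simp) (i := 0) (j := 1) (by decide)
    have := hd ▸ h0
    rw [hξξ, hβξ, hYY] at this
    linarith
  -- ξ in slot 2 and 3 of γ vanishes
  have hγξ1 : ∀ Y Z : V, γ ![Y, ξ, Z] = 0 := by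
    intro Y Z
    have h0 : γ ![ξ + Y, ξ + Y, Z] = 0 :=
      γ.map_eq_zero_of_eq ![ξ + Y, ξ + Y, Z] (by simp) (i := 0) (j := 1) (by decide)
    have hd : γ ![ξ + Y, ξ + Y, Z]
        = γ ![ξ, ξ, Z] + γ ![ξ, Y, Z] + (γ ![Y, ξ, Z] + γ ![Y, Y, Z]) := by
      rw [b3_add0, b3_add1, b3_add1]
    have hYY : γ ![Y, Y, Z] = 0 :=
      γ.map_eq_zero_of_eq ![Y, Y, Z] (by simp) (i := 0) (j := 1) (by decide)
    have := hd ▸ h0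
    rw [hγξ, hγξ, hYY] at this
    linarith
  have hγξ2 : ∀ Y Z : V, γ ![Y, Z, ξ] = 0 := by
    intro Y Z
    have h0 : γ ![ξ + Y, Z, ξ + Y] = 0 :=
      γ.map_eq_zero_of_eq ![ξ + Y, Z, ξ + Y] (by simp) (i := 0) (j := 2) (by decide)
    have hd : γ ![ξ + Y, Z, ξ + Y]
        = γ ![ξ, Z, ξ] + γ ![ξ, Z, Y] + (γ ![Y, Z, ξ] + γ ![Y, Z, Y]) := by
      rw [b3_add0, b3_add2, b3_add2]
    have hYY : γ ![Y, Z, Y] = 0 :=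
      γ.map_eq_zero_of_eq ![Y, Z, Y] (by simp) (i := 0) (j := 2) (by decide)
    have := hd ▸ h0
    rw [hγξ, hγξ, hYY] at this
    linarith
  have hβJ : ∀ (s t : ℝ) (X Y : V),
      β ![s • ξ + φ X, t • ξ + φ Y] = β ![X, Y] := by
    intro s t X Y
    simp only [b2_add0, b2_add1, b2_smul0, b2_smul1, hβξ, hβξ', hβ11]
    ring
  have hγJ : ∀ (r s t : ℝ) (X Y Z : V),
      γ ![r • ξ + φ X, s • ξ + φ Y, t • ξ + φ Z] = γ ![φ X, φ Y, φ Z] := by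
    intro r s t X Y Z
    simp only [b3_add0, b3_add1, b3_add2, b3_smul0, b3_smul1, b3_smul2,
      hγξ, hγξ1, hγξ2]
    ring
  intro w₁ w₂ w₃
  simp only [Jcyl, hβJ, hγJ]
  ring
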